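/- arXiv:2602.13144 — 7 statements merged into one kernel-verified Lean document; each statement's English description precedes it below -/
import Mathlib

section
/- Let F̂ be an extension of a Set-functor F. If for every relation r : X ⇸ X with 1_X ≤ r one has 1_{FX} ≤ F̂r, then for every surjective function e : X → Y, F̂(e°) = (F e)°. -/
open CategoryTheory

/-- The graph of a function, as a relation. -/
def graphRel {X Y : Type} (f : X → Y) : Rel X Y := fun x y => f x = y

/-- Relational composition (as `Rel.comp` in the older Mathlib). -/
def Rel.comp {α β γ : Type*} (r : Rel α β) (s : Rel β γ) : Rel α γ := fun x z => ∃ y, r x y ∧ s y z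

/-- Converse relation (as `Rel.inv` in the older Mathlib). -/
def Rel.inv {α β : Type*} (r : Rel α β) : Rel β α := flip r

/-- An extension of a `Set`-endofunctor `F` to the category of sets and relations:
an assignment on relations that preserves relational composition and agrees with `F`
on (graphs of) functions. -/
structure RelExtension (F : Type ⥤ Type) where
  ext : ∀ {X Y : Type}, Rel X Y → Rel (F.obj X) (F.obj Y)
  ext_comp : ∀ {X Y Z : Type} (r : Rel X Y) (s : Rel Y Z),
    ext (r.comp s) = (ext r).comp (ext s)
  ext_fun : ∀ {X Y : Type} (f : X → Y), ext (graphRel f) = graphRel (F.map (TypeCat.ofHom f))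

theorem stmt4 (F : Type ⥤ Type) (E : RelExtension F)
    (h : ∀ (X : Type) (r : Rel X X), graphRel (id : X → X) ≤ r →
      graphRel (id : F.obj X → F.obj X) ≤ E.ext r)
    {X Y : Type} (e : X → Y) (he : Function.Surjective e) :
    E.ext (graphRel e).inv = (graphRel (F.map (TypeCat.ofHom e))).inv := by
  set r : Rel X Y := graphRel e with hr
  -- r° ∘ r = id on Y (since e is surjective)
  have hcomp1 : r.inv.comp r = graphRel (id : Y → Y) := by
    funext y y'
    simp only [Rel.comp, Rel.inv, Function.flip_def, hr, graphRel]
    apply propext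
    constructor
    · rintro ⟨x, hx, hx'⟩; simp [← hx, hx']
    · rintro rfl; obtain ⟨x, hx⟩ := he y; exact ⟨x, hx, hx⟩
  -- r ∘ r° ≥ id on X
  have hcomp2 : graphRel (id : X → X) ≤ r.comp r.inv := by
    intro x x' hx
    exact ⟨e x, rfl, by simp [graphRel] at hx; simp [hr, Rel.inv, Function.flip_def, graphRel, hx]⟩
  have h1 : graphRel (id : F.obj X → F.obj X) ≤ (E.ext r).comp (E.ext r.inv) := by
    rw [← E.ext_comp]; exact h _ _ hcomp2
  have h2 : (E.ext r.inv).comp (E.ext r) = graphRel (id : F.obj Y → F.obj Y) := by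
    rw [← E.ext_comp, hcomp1, E.ext_fun, show F.map (TypeCat.ofHom (id : Y → Y)) = 𝟙 _ from F.map_id Y]
    rfl
  have hE : E.ext r = graphRel (F.map (TypeCat.ofHom e)) := E.ext_fun e
  funext b a
  apply propext
  constructor
  · intro hba
    have : ((E.ext r.inv).comp (E.ext r)) b (F.map (TypeCat.ofHom e) a) :=
      ⟨a, hba, by rw [hE]; rfl⟩
    rw [h2] at this
    exact this.symm
  · intro hba
    have h1' : ((E.ext r).comp (E.ext r.inv)) a a := h1 a a rfl
    obtain ⟨c, hc1, hc2⟩ := h1'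
    rw [hE] at hc1
    have : c = b := hc1.symm.trans hba
    rwa [this] at hc2
end

section
/- An extension F̂ of a Set-functor F is locally monotone if and only if for every set X, F ρ₁ ≤ F̂(∇_X°), where ∇_X : X + X → X is the codiagonal and ρ₁ : X → X + X is the first coproduct injection. -/
open CategoryTheory

/-- Local monotonicity of an extension. -/
def LocallyMonotone {F : Type ⥤ Type} (E : RelExtension F) : Prop :=
  ∀ (X Y : Type) (r s : Rel X Y), r ≤ s → E.ext r ≤ E.ext s

theorem stmt5 (F : Type ⥤ Type) (E : RelExtension F) :
    LocallyMonotone E ↔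
      ∀ X : Type, graphRel (F.map (TypeCat.ofHom (Sum.inl : X → X ⊕ X))) ≤
        E.ext (graphRel (Sum.elim id id : X ⊕ X → X)).inv := by
  constructor
  · intro hmono X
    rw [← E.ext_fun (Sum.inl : X → X ⊕ X)]
    apply hmono
    intro x z hxz
    cases hxz
    rfl
  · intro H X Y r s hrs
    -- auxiliary relation on X ⊕ X
    set t : Rel (X ⊕ X) Y := Sum.elim r s with ht
    have hr : r = (graphRel (Sum.inl : X → X ⊕ X)).comp t := by
      funext x y
      simp only [Rel.comp, graphRel, ht]
      apply propext
      constructor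
      · intro h; exact ⟨Sum.inl x, rfl, h⟩
      · rintro ⟨z, rfl, h⟩; exact h
    have hs : s = (graphRel (Sum.elim id id : X ⊕ X → X)).inv.comp t := by
      funext x y
      simp only [Rel.comp, Rel.inv, flip, graphRel, ht]
      apply propext
      constructor
      · intro h; exact ⟨Sum.inr x, rfl, h⟩
      · rintro ⟨z, hz, h⟩
        cases z with
        | inl a =>
          simp only [Sum.elim_inl, id] at hz
          subst hz
          exact hrs _ _ h
        | inr a =>
          simp only [Sum.elim_inr, id] at hz
          subst hz
          exact h
    intro a b hab
    rw [hr, E.ext_comp, E.ext_fun] at hab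
    rw [hs, E.ext_comp]
    obtain ⟨c, hc1, hc2⟩ := hab
    exact ⟨c, H X a c hc1, hc2⟩
end

section
/- Suppose the Set-functor F preserves weak pullbacks, F̄ is its Barr extension, and F̂ is any extension of F. If F̄ ≤ F̂ pointwise (or F̄ ≥ F̂ pointwise), then F̄ = F̂. -/
open CategoryTheory

/-- A commuting square of functions is a weak pullback if every competing cone factors
through it (not necessarily uniquely). -/
def IsWeakPullback {A B C D : Type} (p : A → B) (q : A → C) (f : B → D) (g : C → D) : Prop :=
  (∀ a, f (p a) = g (q a)) ∧ ∀ b c, f b = g c → ∃ a, p a = b ∧ q a = c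

/-- A functor preserves weak pullbacks if it maps weak pullback squares to weak pullback
squares. -/
def PreservesWeakPullbacks (F : Type ⥤ Type) : Prop :=
  ∀ (A B C D : Type) (p : A → B) (q : A → C) (f : B → D) (g : C → D),
    IsWeakPullback p q f g → IsWeakPullback (F.map (TypeCat.ofHom p)) (F.map (TypeCat.ofHom q)) (F.map (TypeCat.ofHom f)) (F.map (TypeCat.ofHom g))

/-- The Barr extension of a functor, defined via the canonical span factorization of a
relation. -/
def barrExt (F : Type ⥤ Type) {X Y : Type} (r : Rel X Y) : Rel (F.obj X) (F.obj Y) :=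
  fun a b => ∃ c : F.obj {p : X × Y // r p.1 p.2},
    F.map (TypeCat.ofHom (fun p => p.1.1)) c = a ∧ F.map (TypeCat.ofHom (fun p => p.1.2)) c = b

namespace Stmt7Proof

/-- The converse graph of a function, as a relation. -/
def coGraph {X Z : Type} (f : Z → X) : Rel X Z := fun x z => f z = x

lemma graph_comp {X Y Z : Type} (a : X → Y) (b : Y → Z) :
    (graphRel a).comp (graphRel b) = graphRel (b ∘ a) := by
  funext x z
  apply propext
  constructor
  · rintro ⟨y, (h1 : a x = y), (h2 : b y = z)⟩
    subst h1; exact h2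
  · intro h; exact ⟨a x, rfl, h⟩

lemma coGraph_comp {X Y Z : Type} (a : Y → X) (b : Z → Y) :
    (coGraph a).comp (coGraph b) = coGraph (a ∘ b) := by
  funext x z
  apply propext
  constructor
  · rintro ⟨y, (h1 : a y = x), (h2 : b z = y)⟩
    subst h2; exact h1
  · intro h; exact ⟨b z, h, rfl⟩

lemma tab_decomp {X Y : Type} (r : Rel X Y) :
    (coGraph (fun p : {p : X × Y // r p.1 p.2} => p.1.1)).comp
      (graphRel (fun p : {p : X × Y // r p.1 p.2} => p.1.2)) = r := by
  funext x y
  apply propext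
  constructor
  · rintro ⟨c, (h1 : c.1.1 = x), (h2 : c.1.2 = y)⟩
    have := c.2; rw [h1, h2] at this; exact this
  · intro h; exact ⟨⟨(x, y), h⟩, rfl, rfl⟩

variable {F : Type ⥤ Type}

lemma barr_tab {X Y : Type} (r : Rel X Y) :
    barrExt F r = (coGraph (F.map (TypeCat.ofHom (fun p : {p : X × Y // r p.1 p.2} => p.1.1)))).comp
      (graphRel (F.map (TypeCat.ofHom (fun p : {p : X × Y // r p.1 p.2} => p.1.2)))) := rfl

lemma barr_coGraph {X Z : Type} (f : Z → X) :
    barrExt F (coGraph f) = coGraph (F.map (TypeCat.ofHom f)) := by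
  funext a b
  apply propext
  constructor
  · rintro ⟨c, h1, h2⟩
    have hfe : (fun p : {p : X × Z // coGraph f p.1 p.2} => p.1.1)
        = fun p => f p.1.2 := by
      funext p; exact p.2.symm
    show F.map (TypeCat.ofHom f) b = a
    rw [← h1, ← h2, hfe]
    exact (FunctorToTypes.map_comp_apply F
      (X := {p : X × Z // coGraph f p.1 p.2})
      (TypeCat.ofHom (fun p => p.1.2)) (TypeCat.ofHom f) c).symm
  · intro h
    let e : Z → {p : X × Z // coGraph f p.1 p.2} := fun z => ⟨(f z, z), rfl⟩
    refine ⟨F.map (TypeCat.ofHom e) b, ?_, ?_⟩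
    · show F.map (TypeCat.ofHom (fun p => p.1.1)) (F.map (TypeCat.ofHom e) b) = a
      rw [← FunctorToTypes.map_comp_apply]
      exact h
    · show F.map (TypeCat.ofHom (fun p => p.1.2)) (F.map (TypeCat.ofHom e) b) = b
      rw [← FunctorToTypes.map_comp_apply]
      exact FunctorToTypes.map_id_apply F b

lemma barr_subid {X : Type} {r : Rel X X} (hr : ∀ x y, r x y → x = y) :
    ∀ a b, barrExt F r a b → a = b := by
  rintro a b ⟨c, h1, h2⟩
  have : (fun p : {p : X × X // r p.1 p.2} => p.1.1)
      = fun p => p.1.2 := funext fun p => hr _ _ p.2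
  rw [← h1, ← h2, this]

variable (E : RelExtension F)

lemma ext_graph_id (X : Type) :
    E.ext (graphRel (@id X)) = graphRel (@id (F.obj X)) := by
  rw [E.ext_fun]
  exact congrArg (fun g : F.obj X ⟶ F.obj X => graphRel g) (F.map_id X)


section CaseA

/-- The case A hypothesis specialized to cographs. -/
lemma A_lower (hA : ∀ (X Y : Type) (r : Rel X Y), barrExt F r ≤ E.ext r)
    {X Z : Type} (f : Z → X) : coGraph (F.map (TypeCat.ofHom f)) ≤ E.ext (coGraph f) := by
  have := hA X Z (coGraph f)
  rwa [barr_coGraph] at this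

/-- Surjective cographs are determined (case A). -/
lemma A_surj (hA : ∀ (X Y : Type) (r : Rel X Y), barrExt F r ≤ E.ext r)
    {V Z : Type} (q : Z → V) (hq : Function.Surjective q) :
    E.ext (coGraph q) = coGraph (F.map (TypeCat.ofHom q)) := by
  have hSurjEq : (coGraph q).comp (graphRel q) = graphRel (@id V) := by
    funext v v'
    apply propext
    constructor
    · rintro ⟨z, (h1 : q z = v), (h2 : q z = v')⟩
      exact h1.symm.trans h2
    · intro h
      obtain ⟨z, hz⟩ := hq v
      refine ⟨z, hz, ?_⟩
      show q z = v'
      rw [hz]; exact h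
  have hE : (E.ext (coGraph q)).comp (graphRel (F.map (TypeCat.ofHom q))) = graphRel (@id (F.obj V)) := by
    rw [← E.ext_fun q, ← E.ext_comp, hSurjEq, ext_graph_id]
  funext v c
  apply propext
  constructor
  · intro hT
    have : ((E.ext (coGraph q)).comp (graphRel (F.map (TypeCat.ofHom q)))) v (F.map (TypeCat.ofHom q) c) := ⟨c, hT, rfl⟩
    rw [hE] at this
    exact (show v = F.map (TypeCat.ofHom q) c from this).symm
  · intro h
    exact A_lower E hA q v c h

/-- The key technical lemma: in case A, injective cographs with inhabited domain
are determined. -/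
lemma A_inj (hF : PreservesWeakPullbacks F)
    (hA : ∀ (X Y : Type) (r : Rel X Y), barrExt F r ≤ E.ext r)
    {A X : Type} (i : A → X) (hi : Function.Injective i) (a₀ : A) :
    E.ext (coGraph i) = coGraph (F.map (TypeCat.ofHom i)) := by
  classical
  apply le_antisymm ?upper (A_lower E hA i)
  intro x w hT
  show F.map (TypeCat.ofHom i) w = x
  set rng : Set X := Set.range i with hrng
  set nu : X × X → X := fun p => if p.1 ∈ rng then p.1 else p.2 with hnu
  have nu_mem : ∀ p : X × X, p.1 ∈ rng → nu p = p.1 := fun p hp => if_pos hp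
  have nu_not_mem : ∀ p : X × X, p.1 ∉ rng → nu p = p.2 := fun p hp => if_neg hp
  have nu_diag : ∀ z : X, nu (z, z) = z := fun z => ite_self z
  set Ahat := {p : X × X // nu p ∈ rng} with hAhat
  set jhat : Ahat → X × X := Subtype.val with hjhat
  set piA : Ahat → A := fun s => Classical.choose s.2 with hpiA
  have piA_spec : ∀ s : Ahat, i (piA s) = nu s.val := fun s => Classical.choose_spec s.2
  -- probe equality
  have EP : (graphRel nu).comp (coGraph i) = (coGraph jhat).comp (graphRel piA) := by
    funext p a
    apply propext
    constructor
    · rintro ⟨x', (hx' : nu p = x'), (ha : i a = x')⟩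
      have hmem : nu p ∈ rng := ⟨a, by rw [ha, hx']⟩
      refine ⟨⟨p, hmem⟩, rfl, ?_⟩
      show piA ⟨p, hmem⟩ = a
      apply hi
      rw [piA_spec ⟨p, hmem⟩]
      exact (ha.trans hx'.symm).symm ▸ rfl
    · rintro ⟨s, (hs : s.val = p), (hpa : piA s = a)⟩
      refine ⟨nu p, rfl, ?_⟩
      show i a = nu p
      rw [← hpa, piA_spec s, hs]
  have EPE : (graphRel (F.map (TypeCat.ofHom nu))).comp (E.ext (coGraph i)) =
      (E.ext (coGraph jhat)).comp (graphRel (F.map (TypeCat.ofHom piA))) := by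
    rw [← E.ext_fun nu, ← E.ext_fun piA, ← E.ext_comp, ← E.ext_comp, EP]
  set Delta : X → X × X := fun z => (z, z) with hDelta
  have nuDelta : ∀ (v : F.obj X), F.map (TypeCat.ofHom nu) (F.map (TypeCat.ofHom Delta) v) = v := by
    intro v
    have h1 : F.map (TypeCat.ofHom Delta ≫ TypeCat.ofHom nu) v = F.map (TypeCat.ofHom nu) (F.map (TypeCat.ofHom Delta) v) :=
      FunctorToTypes.map_comp_apply F (TypeCat.ofHom Delta) (TypeCat.ofHom nu) v
    have h2 : TypeCat.ofHom Delta ≫ TypeCat.ofHom nu = 𝟙 X := by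
      ext z; exact nu_diag z
    rw [h2, FunctorToTypes.map_id_apply] at h1
    exact h1.symm
  -- step 1: transfer hT along the probe
  have step1 : ((E.ext (coGraph jhat)).comp (graphRel (F.map (TypeCat.ofHom piA)))) (F.map (TypeCat.ofHom Delta) x) w := by
    rw [← EPE]
    exact ⟨x, nuDelta x, hT⟩
  obtain ⟨what, hwhat, (hwp : F.map (TypeCat.ofHom piA) what = w)⟩ := step1
  -- the two retractions
  have else_mem1 : ∀ p : X × X, ¬(nu p ∈ rng) → nu (p.1, i a₀) ∈ rng := by
    intro p h
    have h1 : p.1 ∉ rng := by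
      intro hmem
      exact h (by rw [nu_mem p hmem]; exact hmem)
    rw [nu_not_mem (p.1, i a₀) h1]
    exact ⟨a₀, rfl⟩
  have else_mem2 : ∀ p : X × X, nu (i a₀, p.2) ∈ rng := by
    intro p
    rw [nu_mem (i a₀, p.2) ⟨a₀, rfl⟩]
    exact ⟨a₀, rfl⟩
  set rho1 : X × X → Ahat := fun p =>
    if h : nu p ∈ rng then ⟨p, h⟩ else ⟨(p.1, i a₀), else_mem1 p h⟩ with hrho1
  set rho2 : X × X → Ahat := fun p =>
    if h : nu p ∈ rng then ⟨p, h⟩ else ⟨(i a₀, p.2), else_mem2 p⟩ with hrho2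
  -- retraction identities give F.map (TypeCat.ofHom rho_k) (F.map (TypeCat.ofHom Delta) x) = what
  have retract : ∀ rho : X × X → Ahat, (∀ s : Ahat, rho s.val = s) →
      F.map (TypeCat.ofHom rho) (F.map (TypeCat.ofHom Delta) x) = what := by
    intro rho hret
    have RK : (coGraph rho).comp (coGraph jhat) = graphRel (@id Ahat) := by
      funext s s'
      apply propext
      constructor
      · rintro ⟨p, (hp : rho p = s), (hj : jhat s' = p)⟩
        show s = s'
        rw [← hp, ← hj, hret s']
      · intro h
        have hss : s = s' := h
        refine ⟨jhat s', ?_, rfl⟩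
        show rho (jhat s') = s
        rw [hret s', hss]
    have RKE : (E.ext (coGraph rho)).comp (E.ext (coGraph jhat)) =
        graphRel (@id (F.obj Ahat)) := by
      rw [← E.ext_comp, RK, ext_graph_id]
    have hpair : ((E.ext (coGraph rho)).comp (E.ext (coGraph jhat)))
        (F.map (TypeCat.ofHom rho) (F.map (TypeCat.ofHom Delta) x)) what :=
      ⟨F.map (TypeCat.ofHom Delta) x, A_lower E hA rho _ _ rfl, hwhat⟩
    rw [RKE] at hpair
    exact hpair
  have hret1 : ∀ s : Ahat, rho1 s.val = s := by
    rintro ⟨pv, hp⟩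
    show rho1 pv = ⟨pv, hp⟩
    exact dif_pos hp
  have hret2 : ∀ s : Ahat, rho2 s.val = s := by
    rintro ⟨pv, hp⟩
    show rho2 pv = ⟨pv, hp⟩
    exact dif_pos hp
  have hw1 := retract rho1 hret1
  have hw2 := retract rho2 hret2
  -- the two composite maps X → X × X
  set alpha : X → X × X := fun z => jhat (rho1 (Delta z)) with halpha
  set beta : X → X × X := fun z => jhat (rho2 (Delta z)) with hbeta
  have alpha_spec : ∀ z : X, (z ∈ rng → alpha z = (z, z)) ∧ (z ∉ rng → alpha z = (z, i a₀)) := by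
    intro z
    have hc : nu (z, z) = z := nu_diag z
    constructor
    · intro hz
      have hmz : nu (z, z) ∈ rng := by rw [hc]; exact hz
      show jhat (rho1 (z, z)) = (z, z)
      have : rho1 (z, z) = ⟨(z, z), hmz⟩ := dif_pos hmz
      rw [this]
    · intro hz
      have hnm : ¬(nu (z, z) ∈ rng) := fun hmem => hz (by rw [← hc]; exact hmem)
      show jhat (rho1 (z, z)) = (z, i a₀)
      have : rho1 (z, z) = ⟨(z, i a₀), else_mem1 (z, z) hnm⟩ := dif_neg hnm
      rw [this]
  have beta_spec : ∀ z : X, (z ∈ rng → beta z = (z, z)) ∧ (z ∉ rng → beta z = (i a₀, z)) := by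
    intro z
    have hc : nu (z, z) = z := nu_diag z
    constructor
    · intro hz
      have hmz : nu (z, z) ∈ rng := by rw [hc]; exact hz
      show jhat (rho2 (z, z)) = (z, z)
      have : rho2 (z, z) = ⟨(z, z), hmz⟩ := dif_pos hmz
      rw [this]
    · intro hz
      have hnm : ¬(nu (z, z) ∈ rng) := fun hmem => hz (by rw [← hc]; exact hmem)
      show jhat (rho2 (z, z)) = (i a₀, z)
      have : rho2 (z, z) = ⟨(i a₀, z), else_mem2 (z, z)⟩ := dif_neg hnm
      rw [this]
  have hwpb : IsWeakPullback i i alpha beta := by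
    constructor
    · intro a
      have hmem : i a ∈ rng := ⟨a, rfl⟩
      rw [(alpha_spec (i a)).1 hmem, (beta_spec (i a)).1 hmem]
    · intro x₁ x₂ hab
      by_cases h₁ : x₁ ∈ rng <;> by_cases h₂ : x₂ ∈ rng
      · rw [(alpha_spec x₁).1 h₁, (beta_spec x₂).1 h₂] at hab
        obtain ⟨a, ha⟩ := h₁
        exact ⟨a, ha, ha.trans (congrArg Prod.fst hab)⟩
      · rw [(alpha_spec x₁).1 h₁, (beta_spec x₂).2 h₂] at hab
        have h21 : x₁ = x₂ := congrArg Prod.snd hab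
        exact absurd (h21 ▸ h₁) h₂
      · rw [(alpha_spec x₁).2 h₁, (beta_spec x₂).1 h₂] at hab
        have h21 : x₁ = x₂ := congrArg Prod.fst hab
        exact absurd (h21.symm ▸ h₂) h₁
      · rw [(alpha_spec x₁).2 h₁, (beta_spec x₂).2 h₂] at hab
        have h21 : x₁ = i a₀ := congrArg Prod.fst hab
        exact absurd (h21 ▸ (⟨a₀, rfl⟩ : (i a₀) ∈ rng) : x₁ ∈ rng) h₁
  -- F-level equality of alpha and beta at x
  have hab : F.map (TypeCat.ofHom alpha) x = F.map (TypeCat.ofHom beta) x := by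
    have e1 : F.map (TypeCat.ofHom alpha) x = F.map (TypeCat.ofHom jhat) (F.map (TypeCat.ofHom rho1) (F.map (TypeCat.ofHom Delta) x)) := by
      have c1 : F.map (TypeCat.ofHom Delta ≫ TypeCat.ofHom rho1) x = F.map (TypeCat.ofHom rho1) (F.map (TypeCat.ofHom Delta) x) :=
        FunctorToTypes.map_comp_apply F (TypeCat.ofHom Delta) (TypeCat.ofHom rho1) x
      have c2 : F.map ((TypeCat.ofHom Delta ≫ TypeCat.ofHom rho1) ≫ TypeCat.ofHom jhat) x = F.map (TypeCat.ofHom jhat) (F.map (TypeCat.ofHom Delta ≫ TypeCat.ofHom rho1) x) :=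
        FunctorToTypes.map_comp_apply F (TypeCat.ofHom Delta ≫ TypeCat.ofHom rho1) (TypeCat.ofHom jhat) x
      rw [c1] at c2
      exact c2
    have e2 : F.map (TypeCat.ofHom beta) x = F.map (TypeCat.ofHom jhat) (F.map (TypeCat.ofHom rho2) (F.map (TypeCat.ofHom Delta) x)) := by
      have c1 : F.map (TypeCat.ofHom Delta ≫ TypeCat.ofHom rho2) x = F.map (TypeCat.ofHom rho2) (F.map (TypeCat.ofHom Delta) x) :=
        FunctorToTypes.map_comp_apply F (TypeCat.ofHom Delta) (TypeCat.ofHom rho2) x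
      have c2 : F.map ((TypeCat.ofHom Delta ≫ TypeCat.ofHom rho2) ≫ TypeCat.ofHom jhat) x = F.map (TypeCat.ofHom jhat) (F.map (TypeCat.ofHom Delta ≫ TypeCat.ofHom rho2) x) :=
        FunctorToTypes.map_comp_apply F (TypeCat.ofHom Delta ≫ TypeCat.ofHom rho2) (TypeCat.ofHom jhat) x
      rw [c1] at c2
      exact c2
    rw [e1, e2, hw1, hw2]
  obtain ⟨ahat, hahat, -⟩ := (hF A X X (X × X) i i alpha beta hwpb).2 x x hab
  -- row rule: finish
  have RR : (graphRel i).comp (coGraph i) = graphRel (@id A) := by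
    funext a a'
    apply propext
    constructor
    · rintro ⟨x', (h1 : i a = x'), (h2 : i a' = x')⟩
      exact hi (h1.trans h2.symm)
    · intro h
      have haa : a = a' := h
      subst haa
      exact ⟨i a, rfl, rfl⟩
  have RRE : (graphRel (F.map (TypeCat.ofHom i))).comp (E.ext (coGraph i)) = graphRel (@id (F.obj A)) := by
    rw [← E.ext_fun i, ← E.ext_comp, RR, ext_graph_id]
  have hrow : ((graphRel (F.map (TypeCat.ofHom i))).comp (E.ext (coGraph i))) ahat w := ⟨x, hahat, hT⟩
  rw [RRE] at hrow
  rw [← (show ahat = w from hrow)]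
  exact hahat
end CaseA

/-- map compatibility for composing cographs at the F level. -/
lemma map_coGraph_comp {X Y Z : Type} (a : Y → X) (b : Z → Y) :
    (coGraph (F.map (TypeCat.ofHom a))).comp (coGraph (F.map (TypeCat.ofHom b))) = coGraph (F.map (TypeCat.ofHom (a ∘ b))) := by
  have hm : F.map (TypeCat.ofHom a) ∘ F.map (TypeCat.ofHom b) = F.map (TypeCat.ofHom (a ∘ b)) :=
    funext fun c => (FunctorToTypes.map_comp_apply F (TypeCat.ofHom b) (TypeCat.ofHom a) c).symm
  rw [coGraph_comp, hm]

/-- Empty-domain cographs are determined (case A). -/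
lemma A_empty (hF : PreservesWeakPullbacks F)
    (hA : ∀ (X Y : Type) (r : Rel X Y), barrExt F r ≤ E.ext r)
    {Z X : Type} (hZ : IsEmpty Z) (f : Z → X) :
    E.ext (coGraph f) = coGraph (F.map (TypeCat.ofHom f)) := by
  classical
  by_cases hX : Nonempty X
  · obtain ⟨x₀⟩ := hX
    set t : Unit → Bool := fun _ => true with hts
    set fb : Unit → Bool := fun _ => false with hfbs
    have ht : E.ext (coGraph t) = coGraph (F.map (TypeCat.ofHom t)) :=
      A_inj E hF hA t (fun _ _ _ => rfl) ()
    set r01 : Rel Unit Unit := fun _ _ => False with hr01s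
    have hr01 : r01 = (graphRel fb).comp (coGraph t) := by
      funext u v
      apply propext
      constructor
      · intro h; exact h.elim
      · rintro ⟨b, (h1 : fb u = b), (h2 : t v = b)⟩
        have : (false : Bool) = true := h1.trans h2.symm
        simp at this
    have hr01E : ∀ m m', E.ext r01 m m' → F.map (TypeCat.ofHom t) m' = F.map (TypeCat.ofHom fb) m := by
      intro m m' h
      rw [hr01, E.ext_comp, E.ext_fun, ht] at h
      obtain ⟨b, (h1 : F.map (TypeCat.ofHom fb) m = b), (h2 : F.map (TypeCat.ofHom t) m' = b)⟩ := h
      exact h2.trans h1.symm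
    set h₁ : Z → Unit := fun _ => () with hh₁
    have hsq : IsWeakPullback h₁ h₁ fb t := by
      constructor
      · intro z; exact (hZ.false z).elim
      · intro b c h
        have : (false : Bool) = true := h
        simp at this
    have hsqF := hF Z Unit Unit Bool h₁ h₁ fb t hsq
    have hk : (coGraph h₁).comp (graphRel h₁) = r01 := by
      funext u v
      apply propext
      constructor
      · rintro ⟨z, -, -⟩; exact (hZ.false z).elim
      · intro h; exact h.elim
    have hTh : E.ext (coGraph h₁) = coGraph (F.map (TypeCat.ofHom h₁)) := by
      apply le_antisymm ?_ (A_lower E hA h₁)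
      intro m zhat h
      show F.map (TypeCat.ofHom h₁) zhat = m
      have hp : ((E.ext (coGraph h₁)).comp (graphRel (F.map (TypeCat.ofHom h₁)))) m (F.map (TypeCat.ofHom h₁) zhat) :=
        ⟨zhat, h, rfl⟩
      rw [← E.ext_fun h₁, ← E.ext_comp, hk] at hp
      have := hr01E _ _ hp
      obtain ⟨z', hz1, hz2⟩ := hsqF.2 m (F.map (TypeCat.ofHom h₁) zhat) this.symm
      rw [← hz2, hz1]
    set xm : Unit → X := fun _ => x₀ with hxms
    have hxm : E.ext (coGraph xm) = coGraph (F.map (TypeCat.ofHom xm)) :=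
      A_inj E hF hA xm (fun _ _ _ => rfl) ()
    have hfx : f = xm ∘ h₁ := funext fun z => (hZ.false z).elim
    rw [hfx, ← coGraph_comp, E.ext_comp, hxm, hTh, map_coGraph_comp]
  · have hXe : IsEmpty X := not_nonempty_iff.mp hX
    set g : X → Z := fun x => (hXe.false x).elim with hg
    have h1 : coGraph f = graphRel g := by
      funext x z
      exact (hXe.false x).elim
    rw [h1, E.ext_fun]
    have hgf : ∀ v : F.obj Z, F.map (TypeCat.ofHom g) (F.map (TypeCat.ofHom f) v) = v := by
      intro v
      have c1 : F.map (TypeCat.ofHom f ≫ TypeCat.ofHom g) v = F.map (TypeCat.ofHom g) (F.map (TypeCat.ofHom f) v) :=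
        FunctorToTypes.map_comp_apply F (TypeCat.ofHom f) (TypeCat.ofHom g) v
      have c2 : TypeCat.ofHom f ≫ TypeCat.ofHom g = 𝟙 Z := by ext z; exact (hZ.false z).elim
      rw [c2, FunctorToTypes.map_id_apply] at c1
      exact c1.symm
    have hfg : ∀ u : F.obj X, F.map (TypeCat.ofHom f) (F.map (TypeCat.ofHom g) u) = u := by
      intro u
      have c1 : F.map (TypeCat.ofHom g ≫ TypeCat.ofHom f) u = F.map (TypeCat.ofHom f) (F.map (TypeCat.ofHom g) u) :=
        FunctorToTypes.map_comp_apply F (TypeCat.ofHom g) (TypeCat.ofHom f) u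
      have c2 : TypeCat.ofHom g ≫ TypeCat.ofHom f = 𝟙 X := by ext x; exact (hXe.false x).elim
      rw [c2, FunctorToTypes.map_id_apply] at c1
      exact c1.symm
    funext u v
    apply propext
    constructor
    · intro h
      show F.map (TypeCat.ofHom f) v = u
      rw [← (show F.map (TypeCat.ofHom g) u = v from h), hfg]
    · intro h
      show F.map (TypeCat.ofHom g) u = v
      rw [← (show F.map (TypeCat.ofHom f) v = u from h), hgf]

/-- All cographs are determined in case A. -/
lemma A_coGraph (hF : PreservesWeakPullbacks F)
    (hA : ∀ (X Y : Type) (r : Rel X Y), barrExt F r ≤ E.ext r)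
    {Z X : Type} (f : Z → X) :
    E.ext (coGraph f) = coGraph (F.map (TypeCat.ofHom f)) := by
  classical
  by_cases hZ : Nonempty Z
  · obtain ⟨z₀⟩ := hZ
    set i : Set.range f → X := Subtype.val with hi
    set f' : Z → Set.range f := fun z => ⟨f z, ⟨z, rfl⟩⟩ with hf'
    have hif : f = i ∘ f' := rfl
    have hsurj : Function.Surjective f' := by
      rintro ⟨x, z, hz⟩
      exact ⟨z, by simp [hf', hz]⟩
    rw [hif, ← coGraph_comp, E.ext_comp,
      A_inj E hF hA i Subtype.val_injective ⟨f z₀, ⟨z₀, rfl⟩⟩,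
      A_surj E hA f' hsurj, map_coGraph_comp]
  · exact A_empty E hF hA (not_nonempty_iff.mp hZ) f

lemma A_main (hF : PreservesWeakPullbacks F)
    (hA : ∀ (X Y : Type) (r : Rel X Y), barrExt F r ≤ E.ext r)
    {X Y : Type} (r : Rel X Y) : barrExt F r = E.ext r := by
  have hE : E.ext r = (E.ext (coGraph (fun p : {p : X × Y // r p.1 p.2} => p.1.1))).comp
      (graphRel (F.map (TypeCat.ofHom (fun p : {p : X × Y // r p.1 p.2} => p.1.2)))) := by
    conv_lhs => rw [← tab_decomp r]
    rw [E.ext_comp, E.ext_fun]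
  rw [hE, A_coGraph E hF hA, barr_tab]


section CaseB

/-- In case B the extension is monotone. -/
lemma B_mono (hB : ∀ (X Y : Type) (r : Rel X Y), E.ext r ≤ barrExt F r)
    {X Y : Type} {r₁ r₂ : Rel X Y} (h12 : r₁ ≤ r₂) :
    E.ext r₁ ≤ E.ext r₂ := by
  classical
  set Z₂ := {p : X × Y // r₂ p.1 p.2} with hZ₂
  set u : Z₂ → X := fun p => p.1.1 with hu
  set v : Z₂ → Y := fun p => p.1.2 with hv
  set Z₁ := {p : X × Y // r₁ p.1 p.2} with hZ₁
  set j : Z₁ → Z₂ := fun p => ⟨p.1, h12 _ _ p.2⟩ with hj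
  set ej : Rel Z₂ Z₂ := (coGraph j).comp (graphRel j) with hej
  have hdec : r₁ = (coGraph u).comp (ej.comp (graphRel v)) := by
    funext x y
    apply propext
    constructor
    · intro h
      refine ⟨j ⟨(x,y), h⟩, rfl, j ⟨(x,y), h⟩, ⟨⟨(x,y), h⟩, rfl, rfl⟩, rfl⟩
    · rintro ⟨c₂, (hc2 : u c₂ = x), c₃, ⟨p₁, (hp1 : j p₁ = c₂), (hp2 : j p₁ = c₃)⟩,
        (hc3 : v c₃ = y)⟩
      have h1 : u (j p₁) = x := by rw [hp1]; exact hc2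
      have h2 : v (j p₁) = y := by rw [hp2]; exact hc3
      have : u (j p₁) = p₁.1.1 := rfl
      have h2' : v (j p₁) = p₁.1.2 := rfl
      have := p₁.2
      rw [show p₁.1.1 = x from h1, show p₁.1.2 = y from h2] at this
      exact this
  intro a b hab
  rw [hdec, E.ext_comp, E.ext_comp, E.ext_fun] at hab
  obtain ⟨c₂, hc2, c₃, hejc, hc3⟩ := hab
  -- ej is contained in the identity, so its barr ext (hence E.ext by hB) is subid
  have hsub : ∀ z z', ej z z' → z = z' := by
    rintro z z' ⟨p₁, hp1, hp2⟩
    rw [← hp1, ← hp2]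
  have hc23 : c₂ = c₃ := barr_subid hsub _ _ (hB _ _ ej _ _ hejc)
  -- now rebuild membership in E.ext r₂
  have hr2 : E.ext r₂ = (E.ext (coGraph u)).comp (graphRel (F.map (TypeCat.ofHom v))) := by
    conv_lhs => rw [← tab_decomp r₂]
    rw [E.ext_comp, E.ext_fun]
  rw [hr2]
  exact ⟨c₂, hc2, by rw [hc23]; exact hc3⟩

lemma B_main (hB : ∀ (X Y : Type) (r : Rel X Y), E.ext r ≤ barrExt F r)
    {X Y : Type} (r : Rel X Y) : barrExt F r = E.ext r := by
  classical
  set Z := {p : X × Y // r p.1 p.2} with hZ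
  set fL : Z → X := fun p => p.1.1 with hfL
  set fR : Z → Y := fun p => p.1.2 with hfR
  have hrE : E.ext r = (E.ext (coGraph fL)).comp (graphRel (F.map (TypeCat.ofHom fR))) := by
    conv_lhs => rw [← tab_decomp r]
    rw [E.ext_comp, E.ext_fun]
  funext a b
  apply propext
  constructor
  · rintro ⟨c, hc1, hc2⟩
    -- lower bound: diagonal of the kernel
    have hker : graphRel (@id Z) ≤ (graphRel fL).comp (coGraph fL) := by
      intro z z' h
      have hzz : z = z' := h
      subst hzz
      exact ⟨fL z, rfl, rfl⟩
    have hmono := B_mono E hB hker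
    rw [ext_graph_id] at hmono
    have hdiag : E.ext ((graphRel fL).comp (coGraph fL)) c c := hmono c c rfl
    rw [E.ext_comp, E.ext_fun] at hdiag
    obtain ⟨x', (hx' : F.map (TypeCat.ofHom fL) c = x'), hT⟩ := hdiag
    rw [hrE]
    refine ⟨c, ?_, hc2⟩
    have hxa : x' = a := (show F.map (TypeCat.ofHom fL) c = x' from hx').symm.trans hc1
    exact hxa ▸ hT
  · intro hab
    rw [hrE] at hab
    obtain ⟨c, hT, hc2⟩ := hab
    have hup := hB _ _ (coGraph fL)
    rw [barr_coGraph] at hup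
    have hfc : F.map (TypeCat.ofHom fL) c = a := hup a c hT
    exact ⟨c, hfc, hc2⟩

end CaseB

end Stmt7Proof

theorem stmt7 (F : Type ⥤ Type) (hF : PreservesWeakPullbacks F) (E : RelExtension F)
    (h : (∀ (X Y : Type) (r : Rel X Y), barrExt F r ≤ E.ext r) ∨
         (∀ (X Y : Type) (r : Rel X Y), E.ext r ≤ barrExt F r)) :
    ∀ (X Y : Type) (r : Rel X Y), barrExt F r = E.ext r := by
  rcases h with hA | hB
  · intro X Y r
    exact Stmt7Proof.A_main E hF hA r
  · intro X Y r
    exact Stmt7Proof.B_main E hB r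
end

section
/- For every Set-functor F and every function e : Y → X, the graph of F e contains the union over all functions f : Y → X + X with e · f° = ∇_X of the relations (F ρ₁)° · F f, where ∇_X : X + X → X is the codiagonal and ρ₁ the first coproduct injection. -/
open CategoryTheory

theorem stmt9 (F : Type ⥤ Type) {X Y : Type} (e : Y → X) :
    ∀ f : Y → X ⊕ X,
      ((graphRel f).inv).comp (graphRel e) = graphRel (Sum.elim id id : X ⊕ X → X) →
      (graphRel (F.map (TypeCat.ofHom f))).comp (graphRel (F.map (TypeCat.ofHom (Sum.inl : X → X ⊕ X)))).inv ≤
        graphRel (F.map (TypeCat.ofHom e)) := by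
  intro f h a b hab
  have he : e = (Sum.elim id id : X ⊕ X → X) ∘ f := by
    funext y
    have h1 : ((graphRel f).inv.comp (graphRel e)) (f y) (e y) := ⟨y, rfl, rfl⟩
    rw [h] at h1
    exact h1.symm
  obtain ⟨c, h1, h2⟩ := hab
  have h1 : F.map (TypeCat.ofHom f) a = c := h1
  have h2 : F.map (TypeCat.ofHom (Sum.inl : X → X ⊕ X)) b = c := h2
  show F.map (TypeCat.ofHom e) a = b
  have : F.map (TypeCat.ofHom e) = F.map (TypeCat.ofHom f) ≫ F.map (TypeCat.ofHom (Sum.elim id id : X ⊕ X → X)) := by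
    rw [← F.map_comp]; exact congrArg F.map (by rw [he]; rfl)
  rw [this]
  show F.map (TypeCat.ofHom (Sum.elim id id : X ⊕ X → X)) (F.map (TypeCat.ofHom f) a) = b
  rw [h1, ← h2]
  have : F.map (TypeCat.ofHom (Sum.inl : X → X ⊕ X)) ≫ F.map (TypeCat.ofHom (Sum.elim id id : X ⊕ X → X)) = 𝟙 (F.obj X) := by
    rw [← F.map_comp]
    have : (TypeCat.ofHom (Sum.inl : X → X ⊕ X) ≫ TypeCat.ofHom (Sum.elim id id : X ⊕ X → X)) = 𝟙 X := by rfl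
    rw [this, F.map_id]
  exact congrArg (fun g : F.obj X ⟶ F.obj X => g b) this
end

section
/- Given monads S = (S, e^S, m^S) and T = (T, e^T, m^T) on Set and a monad morphism λ : S → T, the natural transformation with components e^S_{TX} ∘ m^T_X ∘ T λ_X : T S X → S T X is a Kleisli distributive law of the functor T over the monad S: it is natural and commutes with the unit and multiplication of S. -/
/-- A monad on `Set`, given by an object assignment, a functorial action on maps, a unit
and a multiplication. -/
structure SetMonad where
  obj : Type → Type
  map : ∀ {X Y : Type}, (X → Y) → obj X → obj Y
  map_id : ∀ X : Type, map (id : X → X) = id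
  map_comp : ∀ {X Y Z : Type} (f : X → Y) (g : Y → Z), map (g ∘ f) = map g ∘ map f
  unit : ∀ {X : Type}, X → obj X
  mult : ∀ {X : Type}, obj (obj X) → obj X
  unit_natural : ∀ {X Y : Type} (f : X → Y), map f ∘ unit = unit ∘ f
  mult_natural : ∀ {X Y : Type} (f : X → Y), map f ∘ mult = mult ∘ map (map f)
  unit_mult : ∀ X : Type, mult ∘ (unit : obj X → obj (obj X)) = id
  map_unit_mult : ∀ X : Type, mult ∘ map (unit : X → obj X) = id
  mult_assoc : ∀ X : Type,
    (mult : obj (obj X) → obj X) ∘ map mult = mult ∘ mult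

/-- A monad morphism `λ : S → T`: a natural transformation commuting with units and
multiplications. -/
structure SetMonadHom (S T : SetMonad) where
  app : ∀ X : Type, S.obj X → T.obj X
  natural : ∀ {X Y : Type} (f : X → Y), T.map f ∘ app X = app Y ∘ S.map f
  app_unit : ∀ X : Type, app X ∘ (S.unit : X → S.obj X) = T.unit
  app_mult : ∀ X : Type, app X ∘ (S.mult : S.obj (S.obj X) → S.obj X)
    = T.mult ∘ T.map (app X) ∘ app (S.obj X)

/-- Any monad morphism `λ : S → T` induces a Kleisli distributive law
`e^S T ∘ m^T ∘ T λ : T S → S T` of the functor `T` over the monad `S`. -/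
theorem stmt13 (S T : SetMonad) (lam : SetMonadHom S T)
    (σ : ∀ X : Type, T.obj (S.obj X) → S.obj (T.obj X))
    (hσ : ∀ X : Type, σ X = S.unit ∘ T.mult ∘ T.map (lam.app X)) :
    (∀ (X Y : Type) (f : X → Y),
      σ Y ∘ T.map (S.map f) = S.map (T.map f) ∘ σ X) ∧
    (∀ X : Type, σ X ∘ T.map (S.unit : X → S.obj X)
      = (S.unit : T.obj X → S.obj (T.obj X))) ∧
    (∀ X : Type, σ X ∘ T.map (S.mult : S.obj (S.obj X) → S.obj X)
      = S.mult ∘ S.map (σ X) ∘ σ (S.obj X)) := by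
  refine ⟨?_, ?_, ?_⟩
  · intro X Y f
    funext t
    simp only [hσ, Function.comp_apply]
    have h1 := congrFun (S.unit_natural (T.map f)) (T.mult (T.map (lam.app X) t))
    simp only [Function.comp_apply] at h1
    rw [h1]
    have h2 := congrFun (T.mult_natural f) (T.map (lam.app X) t)
    simp only [Function.comp_apply] at h2
    rw [h2]
    have h3 := congrFun (T.map_comp (lam.app X) (T.map f)) t
    have h4 := congrFun (T.map_comp (S.map f) (lam.app Y)) t
    simp only [Function.comp_apply] at h3 h4
    rw [← h3, ← h4, lam.natural]
  · intro X
    funext t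
    simp only [hσ, Function.comp_apply]
    have h1 := congrFun (T.map_comp (S.unit : X → S.obj X) (lam.app X)) t
    simp only [Function.comp_apply] at h1
    rw [← h1, lam.app_unit]
    have h2 := congrFun (T.map_unit_mult X) t
    simp only [Function.comp_apply, id_eq] at h2
    rw [h2]
  · intro X
    funext t
    simp only [hσ, Function.comp_apply]
    -- RHS: S.mult (S.map (σ X) (S.unit ...)) = σ X (...)
    have hr := congrFun (S.unit_natural (S.unit ∘ T.mult ∘ T.map (lam.app X)))
        (T.mult (T.map (lam.app (S.obj X)) t))
    simp only [Function.comp_apply] at hr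
    rw [hr]
    have hm := congrFun (S.unit_mult (T.obj X))
        (S.unit (T.mult (T.map (lam.app X) (T.mult (T.map (lam.app (S.obj X)) t)))))
    simp only [Function.comp_apply, id_eq] at hm
    rw [hm]
    -- now both sides are S.unit applied; reduce to T-level equality
    congr 1
    have h3 := congrFun (T.map_comp (S.mult : S.obj (S.obj X) → S.obj X) (lam.app X)) t
    simp only [Function.comp_apply] at h3
    rw [← h3, lam.app_mult]
    have h4 := congrFun (T.mult_natural (lam.app X)) (T.map (lam.app (S.obj X)) t)
    simp only [Function.comp_apply] at h4
    have h5 := congrFun (T.map_comp (T.map (lam.app X) ∘ lam.app (S.obj X)) T.mult) t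
    simp only [Function.comp_apply] at h5
    rw [h5]
    have h8 := congrFun (T.mult_assoc X)
        (T.map (T.map (lam.app X) ∘ lam.app (S.obj X)) t)
    simp only [Function.comp_apply] at h8
    rw [h8]
    have h6 := congrFun (T.map_comp (lam.app (S.obj X)) (T.map (lam.app X))) t
    simp only [Function.comp_apply] at h6
    rw [h6, ← h4]
end

section
/- The natural transformation ◇ : P → M from the powerset functor to the monotone neighbourhood functor, with components ◇_X(U) = {A ⊆ X | U ∩ A ≠ ∅}, is a monad morphism from the powerset monad to the monotone neighbourhood monad. -/
/-- The monotone neighbourhood functor: upward-closed collections of subsets. -/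
def MNbhd (X : Type) : Type :=
  {A : Set (Set X) // ∀ s t : Set X, s ∈ A → s ⊆ t → t ∈ A}

/-- Action of the monotone neighbourhood functor on maps. -/
def MNbhd.fmap {X Y : Type} (f : X → Y) (A : MNbhd X) : MNbhd Y :=
  ⟨{B : Set Y | f ⁻¹' B ∈ A.1}, fun s t hs hst =>
    A.2 _ _ hs (Set.preimage_mono hst)⟩

/-- Unit of the monotone neighbourhood monad. -/
def MNbhd.unit {X : Type} (x : X) : MNbhd X :=
  ⟨{A : Set X | x ∈ A}, fun _ _ hs hst => hst hs⟩

/-- Multiplication of the monotone neighbourhood monad. -/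
def MNbhd.mult {X : Type} (Φ : MNbhd (MNbhd X)) : MNbhd X :=
  ⟨{A : Set X | {U : MNbhd X | A ∈ U.1} ∈ Φ.1}, fun s t hs hst =>
    Φ.2 _ _ hs (fun U hU => U.2 _ _ hU hst)⟩

/-- The components `◇_X(U) = {A ⊆ X | U ∩ A ≠ ∅}`. -/
def diamond {X : Type} (U : Set X) : MNbhd X :=
  ⟨{A : Set X | (U ∩ A).Nonempty}, fun s t hs hst =>
    hs.mono (Set.inter_subset_inter_right U hst)⟩

/-- `◇ : P → M` is a monad morphism from the powerset monad (unit `x ↦ {x}`,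
multiplication `⋃₀`) to the monotone neighbourhood monad. -/
theorem stmt15 :
    (∀ (X Y : Type) (f : X → Y) (U : Set X),
      MNbhd.fmap f (diamond U) = diamond (f '' U)) ∧
    (∀ (X : Type) (x : X), diamond ({x} : Set X) = MNbhd.unit x) ∧
    (∀ (X : Type) (S : Set (Set X)),
      diamond (⋃₀ S) = MNbhd.mult (MNbhd.fmap diamond (diamond S))) := by
  refine ⟨?_, ?_, ?_⟩
  · intro X Y f U
    apply Subtype.ext
    ext B
    simp only [MNbhd.fmap, diamond, Set.mem_setOf_eq]
    constructor
    · rintro ⟨x, hxU, hxB⟩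
      exact ⟨f x, ⟨x, hxU, rfl⟩, hxB⟩
    · rintro ⟨y, ⟨x, hxU, rfl⟩, hyB⟩
      exact ⟨x, hxU, hyB⟩
  · intro X x
    apply Subtype.ext
    ext A
    simp [diamond, MNbhd.unit, Set.singleton_inter_nonempty]
  · intro X S
    apply Subtype.ext
    ext A
    simp only [diamond, MNbhd.mult, MNbhd.fmap, Set.mem_setOf_eq]
    constructor
    · rintro ⟨x, ⟨U, hUS, hxU⟩, hxA⟩
      exact ⟨U, hUS, x, hxU, hxA⟩
    · rintro ⟨U, hUS, x, hxU, hxA⟩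
      exact ⟨x, ⟨U, hUS, hxU⟩, hxA⟩
end

section
/- Every Kleisli distributive law δ : P P → P P of the powerset functor over the powerset monad satisfies δ_X(∅) = {∅}, and moreover δ_{{0,1,2}}{{0,1},{2}} is either {{0,2},{1,2},{0,1,2}} or {{0,1,2}}. -/
/-- A Kleisli distributive law of the powerset functor over the powerset monad: a natural
transformation `δ : PP → PP` commuting with the unit `η(x) = {x}` and the multiplication
`μ = ⋃₀` of the powerset monad. -/
structure PowDistLaw where
  δ : ∀ {X : Type}, Set (Set X) → Set (Set X)
  natural : ∀ {X Y : Type} (f : X → Y) (S : Set (Set X)),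
    δ (Set.image (Set.image f) S) = Set.image (Set.image f) (δ S)
  unit_law : ∀ {X : Type} (A : Set X),
    δ ((fun x => ({x} : Set X)) '' A) = {A}
  mult_law : ∀ {X : Type} (S : Set (Set (Set X))),
    δ (Set.sUnion '' S) = ⋃₀ ((fun T => δ T) '' δ S)

/-- collapse `{0,1} ↦ 0`, `2 ↦ 1`. -/
private def q32 : Fin 3 → Fin 2 := ![0, 0, 1]
/-- collapse `{0,1} ↦ 2`, `2 ↦ 0`, `3 ↦ 1`. -/
private def p43 : Fin 4 → Fin 3 := ![2, 2, 0, 1]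
/-- blockwise collapse of `{0,1},{2,3},{4,5}`. -/
private def g63 : Fin 6 → Fin 3 := ![0, 0, 1, 1, 2, 2]
/-- identify the blocks `{2,3}` and `{4,5}` (aligned). -/
private def p64 : Fin 6 → Fin 4 := ![0, 1, 2, 3, 2, 3]
/-- identify the blocks `{2,3}` and `{4,5}` (crossed). -/
private def p64' : Fin 6 → Fin 4 := ![0, 1, 2, 3, 3, 2]
/-- swap `0 ↔ 1`. -/
private def s33 : Fin 3 → Fin 3 := ![1, 0, 2]

private lemma fin3cases : ∀ y : Fin 3, y = 0 ∨ y = 1 ∨ y = 2 := by decide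
private lemma fin6cases :
    ∀ y : Fin 6, y = 0 ∨ y = 1 ∨ y = 2 ∨ y = 3 ∨ y = 4 ∨ y = 5 := by decide

/-- Every Kleisli distributive law `δ : PP → PP` satisfies `δ_X ∅ = {∅}`, and
`δ {{0,1},{2}}` is either `{{0,2},{1,2},{0,1,2}}` or `{{0,1,2}}`. -/
theorem stmt18 (law : PowDistLaw) :
    (∀ X : Type, law.δ (∅ : Set (Set X)) = {∅}) ∧
    (law.δ ({{0, 1}, {2}} : Set (Set (Fin 3)))
        = {{0, 2}, {1, 2}, {0, 1, 2}} ∨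
     law.δ ({{0, 1}, {2}} : Set (Set (Fin 3))) = {{0, 1, 2}}) := by
  constructor
  · intro X
    have h := law.unit_law (∅ : Set X)
    rwa [Set.image_empty] at h
  -- Notation: `T := law.δ {{0,1},{2}}`.
  -- Step A : image of T under q32 is {{0,1}}, hence T is nonempty and each
  -- member contains 2 and meets {0,1}.
  have hq : Set.image (Set.image q32) ({{0, 1}, {2}} : Set (Set (Fin 3)))
      = ({{0}, {1}} : Set (Set (Fin 2))) := by
    rw [Set.image_pair, Set.image_singleton, Set.image_pair,
      show q32 0 = 0 from rfl, show q32 1 = 0 from rfl, show q32 2 = 1 from rfl,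
      Set.pair_eq_singleton]
  have hu2 : law.δ ({{0}, {1}} : Set (Set (Fin 2))) = {{0, 1}} := by
    have h := law.unit_law ({0, 1} : Set (Fin 2))
    rwa [Set.image_pair] at h
  have hA : Set.image (Set.image q32) (law.δ ({{0, 1}, {2}} : Set (Set (Fin 3))))
      = {{0, 1}} := by
    rw [← law.natural, hq, hu2]
  have hTne : ∃ B, B ∈ law.δ ({{0, 1}, {2}} : Set (Set (Fin 3))) := by
    have h : ({0, 1} : Set (Fin 2)) ∈
        Set.image (Set.image q32) (law.δ ({{0, 1}, {2}} : Set (Set (Fin 3)))) := by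
      rw [hA]; exact rfl
    obtain ⟨B, hB, -⟩ := h
    exact ⟨B, hB⟩
  have hmem : ∀ B ∈ law.δ ({{0, 1}, {2}} : Set (Set (Fin 3))),
      (2 : Fin 3) ∈ B ∧ ((0 : Fin 3) ∈ B ∨ (1 : Fin 3) ∈ B) := by
    intro B hB
    have h1 : Set.image q32 B = {0, 1} := by
      have h := Set.mem_image_of_mem (Set.image q32) hB
      rw [hA, Set.mem_singleton_iff] at h
      exact h
    constructor
    · have h : (1 : Fin 2) ∈ Set.image q32 B := by
        rw [h1]; exact Or.inr rfl
      obtain ⟨x, hx, hqx⟩ := h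
      rcases fin3cases x with rfl | rfl | rfl
      · exact absurd hqx (by decide)
      · exact absurd hqx (by decide)
      · exact hx
    · have h : (0 : Fin 2) ∈ Set.image q32 B := by
        rw [h1]; exact Or.inl rfl
      obtain ⟨x, hx, hqx⟩ := h
      rcases fin3cases x with rfl | rfl | rfl
      · exact Or.inl hx
      · exact Or.inr hx
      · exact absurd hqx (by decide)
  -- Step B : {0,1,2} ∈ T.
  have hUniv : ({0, 1, 2} : Set (Fin 3)) ∈ law.δ ({{0, 1}, {2}} : Set (Set (Fin 3))) := by
    by_contra hU
    have hkey : ∀ B ∈ law.δ ({{0, 1}, {2}} : Set (Set (Fin 3))),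
        ¬((0 : Fin 3) ∈ B ∧ (1 : Fin 3) ∈ B) := by
      rintro B hB ⟨h0, h1⟩
      have h2 := (hmem B hB).1
      have hBe : B = ({0, 1, 2} : Set (Fin 3)) := by
        ext x
        rcases fin3cases x with rfl | rfl | rfl
        · exact iff_of_true h0 (Or.inl rfl)
        · exact iff_of_true h1 (Or.inr (Or.inl rfl))
        · exact iff_of_true h2 (Or.inr (Or.inr rfl))
      exact hU (hBe ▸ hB)
    -- T₄ := δ {{0,1},{2,3}} : no member contains both 2 and 3.
    have hp : Set.image (Set.image p43) ({{0, 1}, {2, 3}} : Set (Set (Fin 4)))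
        = ({{0, 1}, {2}} : Set (Set (Fin 3))) := by
      rw [Set.image_pair, Set.image_pair, Set.image_pair,
        show p43 0 = 2 from rfl, show p43 1 = 2 from rfl,
        show p43 2 = 0 from rfl, show p43 3 = 1 from rfl,
        Set.pair_eq_singleton]
      exact Set.pair_comm _ _
    have hnat4 : law.δ ({{0, 1}, {2}} : Set (Set (Fin 3)))
        = Set.image (Set.image p43) (law.δ ({{0, 1}, {2, 3}} : Set (Set (Fin 4)))) := by
      rw [← hp, law.natural]
    have hC2 : ∀ B ∈ law.δ ({{0, 1}, {2, 3}} : Set (Set (Fin 4))),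
        ¬((2 : Fin 4) ∈ B ∧ (3 : Fin 4) ∈ B) := by
      rintro B hB ⟨h2, h3⟩
      have hBT : Set.image p43 B ∈ law.δ ({{0, 1}, {2}} : Set (Set (Fin 3))) := by
        rw [hnat4]; exact Set.mem_image_of_mem _ hB
      exact hkey _ hBT ⟨⟨2, h2, rfl⟩, ⟨3, h3, rfl⟩⟩
    -- T₆ := δ {{0,1},{2,3},{4,5}} : nonempty, members meet {2,3} and {4,5}.
    have hg : Set.image (Set.image g63) ({{0, 1}, {2, 3}, {4, 5}} : Set (Set (Fin 6)))
        = ({{0}, {1}, {2}} : Set (Set (Fin 3))) := by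
      rw [Set.image_insert_eq, Set.image_pair, Set.image_pair, Set.image_pair,
        Set.image_pair,
        show g63 0 = 0 from rfl, show g63 1 = 0 from rfl,
        show g63 2 = 1 from rfl, show g63 3 = 1 from rfl,
        show g63 4 = 2 from rfl, show g63 5 = 2 from rfl,
        Set.pair_eq_singleton, Set.pair_eq_singleton, Set.pair_eq_singleton]
    have hu3 : law.δ ({{0}, {1}, {2}} : Set (Set (Fin 3))) = {{0, 1, 2}} := by
      have h := law.unit_law ({0, 1, 2} : Set (Fin 3))
      rwa [Set.image_insert_eq, Set.image_pair] at h
    have hA6 : Set.image (Set.image g63)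
        (law.δ ({{0, 1}, {2, 3}, {4, 5}} : Set (Set (Fin 6)))) = {{0, 1, 2}} := by
      rw [← law.natural, hg, hu3]
    have hT6 : ∃ B, B ∈ law.δ ({{0, 1}, {2, 3}, {4, 5}} : Set (Set (Fin 6))) := by
      have h : ({0, 1, 2} : Set (Fin 3)) ∈ Set.image (Set.image g63)
          (law.δ ({{0, 1}, {2, 3}, {4, 5}} : Set (Set (Fin 6)))) := by
        rw [hA6]; exact rfl
      obtain ⟨B, hB, -⟩ := h
      exact ⟨B, hB⟩
    obtain ⟨B, hB6⟩ := hT6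
    have hgB : Set.image g63 B = {0, 1, 2} := by
      have h := Set.mem_image_of_mem (Set.image g63) hB6
      rw [hA6, Set.mem_singleton_iff] at h
      exact h
    have h23 : (2 : Fin 6) ∈ B ∨ (3 : Fin 6) ∈ B := by
      have h : (1 : Fin 3) ∈ Set.image g63 B := by
        rw [hgB]; exact Or.inr (Or.inl rfl)
      obtain ⟨x, hx, hgx⟩ := h
      rcases fin6cases x with rfl | rfl | rfl | rfl | rfl | rfl
      · exact absurd hgx (by decide)
      · exact absurd hgx (by decide)
      · exact Or.inl hx
      · exact Or.inr hx
      · exact absurd hgx (by decide)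
      · exact absurd hgx (by decide)
    have h45 : (4 : Fin 6) ∈ B ∨ (5 : Fin 6) ∈ B := by
      have h : (2 : Fin 3) ∈ Set.image g63 B := by
        rw [hgB]; exact Or.inr (Or.inr rfl)
      obtain ⟨x, hx, hgx⟩ := h
      rcases fin6cases x with rfl | rfl | rfl | rfl | rfl | rfl
      · exact absurd hgx (by decide)
      · exact absurd hgx (by decide)
      · exact absurd hgx (by decide)
      · exact absurd hgx (by decide)
      · exact Or.inl hx
      · exact Or.inr hx
    -- the two identifications of blocks {2,3} and {4,5}
    have hp3 : Set.image (Set.image p64) ({{0, 1}, {2, 3}, {4, 5}} : Set (Set (Fin 6)))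
        = ({{0, 1}, {2, 3}} : Set (Set (Fin 4))) := by
      rw [Set.image_insert_eq, Set.image_pair, Set.image_pair, Set.image_pair,
        Set.image_pair,
        show p64 0 = 0 from rfl, show p64 1 = 1 from rfl,
        show p64 2 = 2 from rfl, show p64 3 = 3 from rfl,
        show p64 4 = 2 from rfl, show p64 5 = 3 from rfl,
        Set.pair_eq_singleton]
    have hp4 : Set.image (Set.image p64') ({{0, 1}, {2, 3}, {4, 5}} : Set (Set (Fin 6)))
        = ({{0, 1}, {2, 3}} : Set (Set (Fin 4))) := by
      rw [Set.image_insert_eq, Set.image_pair, Set.image_pair, Set.image_pair,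
        Set.image_pair,
        show p64' 0 = 0 from rfl, show p64' 1 = 1 from rfl,
        show p64' 2 = 2 from rfl, show p64' 3 = 3 from rfl,
        show p64' 4 = 3 from rfl, show p64' 5 = 2 from rfl,
        Set.pair_comm (3 : Fin 4) 2, Set.pair_eq_singleton]
    have hD1 : ¬(((2 : Fin 6) ∈ B ∨ (4 : Fin 6) ∈ B) ∧
        ((3 : Fin 6) ∈ B ∨ (5 : Fin 6) ∈ B)) := by
      rintro ⟨hl, hr⟩
      have hBT4 : Set.image p64 B ∈ law.δ ({{0, 1}, {2, 3}} : Set (Set (Fin 4))) := by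
        have hn := law.natural p64 ({{0, 1}, {2, 3}, {4, 5}} : Set (Set (Fin 6)))
        rw [hp3] at hn
        rw [hn]
        exact Set.mem_image_of_mem _ hB6
      refine hC2 _ hBT4 ⟨?_, ?_⟩
      · rcases hl with h | h
        · exact ⟨2, h, rfl⟩
        · exact ⟨4, h, rfl⟩
      · rcases hr with h | h
        · exact ⟨3, h, rfl⟩
        · exact ⟨5, h, rfl⟩
    have hD2 : ¬(((2 : Fin 6) ∈ B ∨ (5 : Fin 6) ∈ B) ∧
        ((3 : Fin 6) ∈ B ∨ (4 : Fin 6) ∈ B)) := by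
      rintro ⟨hl, hr⟩
      have hBT4 : Set.image p64' B ∈ law.δ ({{0, 1}, {2, 3}} : Set (Set (Fin 4))) := by
        have hn := law.natural p64' ({{0, 1}, {2, 3}, {4, 5}} : Set (Set (Fin 6)))
        rw [hp4] at hn
        rw [hn]
        exact Set.mem_image_of_mem _ hB6
      refine hC2 _ hBT4 ⟨?_, ?_⟩
      · rcases hl with h | h
        · exact ⟨2, h, rfl⟩
        · exact ⟨5, h, rfl⟩
      · rcases hr with h | h
        · exact ⟨3, h, rfl⟩
        · exact ⟨4, h, rfl⟩
    rcases h23 with h2 | h3 <;> rcases h45 with h4 | h5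
    · exact hD2 ⟨Or.inl h2, Or.inr h4⟩
    · exact hD1 ⟨Or.inl h2, Or.inr h5⟩
    · exact hD1 ⟨Or.inr h4, Or.inl h3⟩
    · exact hD2 ⟨Or.inr h5, Or.inl h3⟩
  -- Step C : swap symmetry.
  have hs : Set.image (Set.image s33) ({{0, 1}, {2}} : Set (Set (Fin 3)))
      = ({{0, 1}, {2}} : Set (Set (Fin 3))) := by
    rw [Set.image_pair, Set.image_singleton, Set.image_pair,
      show s33 0 = 1 from rfl, show s33 1 = 0 from rfl, show s33 2 = 2 from rfl,
      Set.pair_comm (1 : Fin 3) 0]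
  have hAs : Set.image (Set.image s33) (law.δ ({{0, 1}, {2}} : Set (Set (Fin 3))))
      = law.δ ({{0, 1}, {2}} : Set (Set (Fin 3))) := by
    rw [← law.natural, hs]
  have hswap : ∀ B ∈ law.δ ({{0, 1}, {2}} : Set (Set (Fin 3))),
      Set.image s33 B ∈ law.δ ({{0, 1}, {2}} : Set (Set (Fin 3))) := by
    intro B hB
    rw [← hAs]
    exact Set.mem_image_of_mem _ hB
  have hs02 : Set.image s33 ({0, 2} : Set (Fin 3)) = {1, 2} := by
    rw [Set.image_pair, show s33 0 = 1 from rfl, show s33 2 = 2 from rfl]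
  have hs12 : Set.image s33 ({1, 2} : Set (Fin 3)) = {0, 2} := by
    rw [Set.image_pair, show s33 1 = 0 from rfl, show s33 2 = 2 from rfl]
  -- Final case split.
  by_cases h02 : ({0, 2} : Set (Fin 3)) ∈ law.δ ({{0, 1}, {2}} : Set (Set (Fin 3)))
  · left
    have h12 : ({1, 2} : Set (Fin 3)) ∈ law.δ ({{0, 1}, {2}} : Set (Set (Fin 3))) := by
      have h := hswap _ h02
      rwa [hs02] at h
    apply Set.eq_of_subset_of_subset
    · intro B hB
      obtain ⟨h2, h01⟩ := hmem B hB
      by_cases h0 : (0 : Fin 3) ∈ B <;> by_cases h1 : (1 : Fin 3) ∈ B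
      · have hBe : B = ({0, 1, 2} : Set (Fin 3)) := by
          ext x
          rcases fin3cases x with rfl | rfl | rfl
          · exact iff_of_true h0 (Or.inl rfl)
          · exact iff_of_true h1 (Or.inr (Or.inl rfl))
          · exact iff_of_true h2 (Or.inr (Or.inr rfl))
        rw [hBe]
        exact Or.inr (Or.inr rfl)
      · have hBe : B = ({0, 2} : Set (Fin 3)) := by
          ext x
          rcases fin3cases x with rfl | rfl | rfl
          · exact iff_of_true h0 (Or.inl rfl)
          · exact iff_of_false h1 (by decide)
          · exact iff_of_true h2 (Or.inr rfl)
        rw [hBe]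
        exact Or.inl rfl
      · have hBe : B = ({1, 2} : Set (Fin 3)) := by
          ext x
          rcases fin3cases x with rfl | rfl | rfl
          · exact iff_of_false h0 (by decide)
          · exact iff_of_true h1 (Or.inl rfl)
          · exact iff_of_true h2 (Or.inr rfl)
        rw [hBe]
        exact Or.inr (Or.inl rfl)
      · rcases h01 with h | h
        · exact absurd h h0
        · exact absurd h h1
    · intro B hB
      rcases hB with rfl | rfl | rfl
      · exact h02
      · exact h12
      · exact hUniv
  · right
    apply Set.eq_of_subset_of_subset
    · intro B hB
      obtain ⟨h2, h01⟩ := hmem B hB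
      by_cases h0 : (0 : Fin 3) ∈ B <;> by_cases h1 : (1 : Fin 3) ∈ B
      · have hBe : B = ({0, 1, 2} : Set (Fin 3)) := by
          ext x
          rcases fin3cases x with rfl | rfl | rfl
          · exact iff_of_true h0 (Or.inl rfl)
          · exact iff_of_true h1 (Or.inr (Or.inl rfl))
          · exact iff_of_true h2 (Or.inr (Or.inr rfl))
        rw [hBe]
        rfl
      · have hBe : B = ({0, 2} : Set (Fin 3)) := by
          ext x
          rcases fin3cases x with rfl | rfl | rfl
          · exact iff_of_true h0 (Or.inl rfl)
          · exact iff_of_false h1 (by decide)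
          · exact iff_of_true h2 (Or.inr rfl)
        exact absurd (hBe ▸ hB) h02
      · have hBe : B = ({1, 2} : Set (Fin 3)) := by
          ext x
          rcases fin3cases x with rfl | rfl | rfl
          · exact iff_of_false h0 (by decide)
          · exact iff_of_true h1 (Or.inl rfl)
          · exact iff_of_true h2 (Or.inr rfl)
        have h := hswap _ (hBe ▸ hB)
        rw [hs12] at h
        exact absurd h h02
      · rcases h01 with h | h
        · exact absurd h h0
        · exact absurd h h1
    · intro B hB
      rw [Set.mem_singleton_iff] at hB
      rw [hB]
      exact hUniv
end
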